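/- arXiv:1604.06992 — 2 statements merged into one kernel-verified Lean document; each statement's English description precedes it below -/
import Mathlib

section
/- Let D be a dyadic grid on ℝⁿ and 0 < α < 2n. For dyadic cubes Q₁, Q₂ with Q₁ ⊊ Q₂ and cancellative Haar function h_{Q₂}^{ε₂}, one has I_α^D(1_{Q₁}, h_{Q₂}^{ε₂}) = (1 + c_α)|Q₁|^{α/n} h_{Q₂}^{ε₂} 1_{Q₁} + |Q₁| Σ_{Q : Q₁ ⊊ Q ⊊ Q₂} |Q|^{α/n} h_{Q₂}^{ε₂} 1_Q / |Q|, where c_α is the constant with Σ_{Q ⊊ Q₁} |Q|^{α/n} 1_Q = c_α |Q₁|^{α/n} 1_{Q₁}. -/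
open MeasureTheory Set
open scoped ENNReal Classical

noncomputable section

/-- A dyadic cube in `ℝⁿ`, encoded by its generation `k` and corner `m`:
the cube `∏ i, [2^k m i, 2^k (m i + 1))`. -/
abbrev Cube (n : ℕ) := ℤ × (Fin n → ℤ)

/-- The set in `ℝⁿ` corresponding to a dyadic cube. -/
def cubeSet {n : ℕ} (Q : Cube n) : Set (Fin n → ℝ) :=
  {x | ∀ i, (2:ℝ)^Q.1 * Q.2 i ≤ x i ∧ x i < (2:ℝ)^Q.1 * (Q.2 i + 1)}

/-- The volume `|Q| = 2^{kn}` of a dyadic cube. -/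
def vol {n : ℕ} (Q : Cube n) : ℝ := ((2:ℝ)^Q.1)^n

/-- The non-cancellative signature `ε = (1,…,1)`. -/
def allOne (n : ℕ) : Fin n → Bool := fun _ => true

/-- One-dimensional Haar functions on the dyadic interval `I = [2^k m, 2^k(m+1))`:
`h_I^0 = |I|^{-1/2} (1_{I₋} - 1_{I₊})` (for `e = false`) and `h_I^1 = |I|^{-1/2} 1_I`
(for `e = true`). -/
def haar1 (k m : ℤ) (e : Bool) (x : ℝ) : ℝ :=
  ((2:ℝ)^k) ^ (-(1/2) : ℝ) *
    (if e then Set.indicator (Set.Ico ((2:ℝ)^k * m) ((2:ℝ)^k * (m+1))) (fun _ => (1:ℝ)) x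
     else Set.indicator (Set.Ico ((2:ℝ)^k * m) ((2:ℝ)^k * ((m : ℝ) + 1/2))) (fun _ => (1:ℝ)) x
        - Set.indicator (Set.Ico ((2:ℝ)^k * ((m : ℝ) + 1/2)) ((2:ℝ)^k * (m+1))) (fun _ => (1:ℝ)) x)

/-- The Haar function `h_Q^ε = h_{I₁}^{ε₁} ⊗ ⋯ ⊗ h_{I_n}^{ε_n}` on a dyadic cube. -/
def haar {n : ℕ} (Q : Cube n) (ε : Fin n → Bool) (x : Fin n → ℝ) : ℝ :=
  ∏ i, haar1 Q.1 (Q.2 i) (ε i) (x i)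

/-- The average `⟨f⟩_Q = |Q|⁻¹ ∫_Q f`. -/
def avg {n : ℕ} (f : (Fin n → ℝ) → ℝ) (Q : Cube n) : ℝ :=
  (∫ x in cubeSet Q, f x) / vol Q

/-- The Haar coefficient `⟨f, h_Q^ε⟩`. -/
def haarCoef {n : ℕ} (f : (Fin n → ℝ) → ℝ) (Q : Cube n) (ε : Fin n → Bool) : ℝ :=
  ∫ x, f x * haar Q ε x

/-- The dyadic fractional integral `I_α^D f = Σ_Q |Q|^{α/n} ⟨f⟩_Q 1_Q`. -/
def Ialpha {n : ℕ} (α : ℝ) (f : (Fin n → ℝ) → ℝ) (x : Fin n → ℝ) : ℝ :=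
  ∑' Q : Cube n, vol Q ^ (α / n) * avg f Q * (cubeSet Q).indicator (fun _ => (1:ℝ)) x

/-- The bilinear dyadic fractional integral
`I_α^D(f₁,f₂) = Σ_Q |Q|^{α/n} ⟨f₁⟩_Q ⟨f₂⟩_Q 1_Q`. -/
def IalphaBil {n : ℕ} (α : ℝ) (f₁ f₂ : (Fin n → ℝ) → ℝ) (x : Fin n → ℝ) : ℝ :=
  ∑' Q : Cube n, vol Q ^ (α / n) * avg f₁ Q * avg f₂ Q * (cubeSet Q).indicator (fun _ => (1:ℝ)) x

/-- The constant `c_α = Σ_{j=1}^∞ 2^{-jα}`. -/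
def calpha (α : ℝ) : ℝ := ∑' j : ℕ, (2:ℝ) ^ (-((j:ℝ)+1) * α)

/-- The `k`-th dyadic ancestor `Q^{(k)}` of a dyadic cube. -/
def ancestor {n : ℕ} (k : ℕ) (Q : Cube n) : Cube n :=
  (Q.1 + k, fun i => Int.fdiv (Q.2 i) (2^k))

/-- The center of a dyadic cube (a convenient interior point of `Q`). -/
def center {n : ℕ} (Q : Cube n) : Fin n → ℝ := fun i => (2:ℝ)^Q.1 * ((Q.2 i : ℝ) + 1/2)

/-- An axis-parallel cube (box) of sidelength `l` with corner `a`. -/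
def box {n : ℕ} (a : Fin n → ℝ) (l : ℝ) : Set (Fin n → ℝ) :=
  {x | ∀ i, a i ≤ x i ∧ x i < a i + l}

end

noncomputable section AuxSection

namespace DyadicAux

open MeasureTheory Set

lemma two_zpow_pos (k : ℤ) : (0:ℝ) < 2 ^ k := zpow_pos (by norm_num) k

lemma cubeSet_def {n : ℕ} {Q : Cube n} {x : Fin n → ℝ} :
    x ∈ cubeSet Q ↔ ∀ i, (2:ℝ)^Q.1 * Q.2 i ≤ x i ∧ x i < (2:ℝ)^Q.1 * (Q.2 i + 1) :=
  Iff.rfl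

lemma mem_cubeSet {n : ℕ} {Q : Cube n} {x : Fin n → ℝ} :
    x ∈ cubeSet Q ↔ ∀ i, ⌊x i / 2 ^ Q.1⌋ = Q.2 i := by
  have hp := two_zpow_pos Q.1
  rw [cubeSet_def]
  refine forall_congr' fun i => ?_
  rw [Int.floor_eq_iff, le_div_iff₀ hp, div_lt_iff₀ hp]
  constructor
  · rintro ⟨h1, h2⟩
    exact ⟨by linarith, by linarith⟩
  · rintro ⟨h1, h2⟩

    exact ⟨by linarith, by linarith⟩

/-- The dyadic cube of generation `k` containing `x`. -/
def dcube {n : ℕ} (k : ℤ) (x : Fin n → ℝ) : Cube n := (k, fun i => ⌊x i / (2:ℝ)^k⌋)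

lemma mem_dcube {n : ℕ} (k : ℤ) (x : Fin n → ℝ) : x ∈ cubeSet (dcube k x) :=
  mem_cubeSet.2 fun _ => rfl

lemma eq_dcube {n : ℕ} {Q : Cube n} {x : Fin n → ℝ} (hx : x ∈ cubeSet Q) :
    Q = dcube Q.1 x := by
  obtain ⟨k, m⟩ := Q
  unfold dcube
  exact Prod.ext rfl (funext fun i => (mem_cubeSet.1 hx i).symm)

lemma key1d {k A B m : ℤ} {y : ℝ} (h1 : (2:ℝ)^k * m ≤ y) (h2 : y < (2:ℝ)^k * ((m:ℝ)+1)) :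
    y ∈ Ico ((2:ℝ)^k * (A:ℝ)) ((2:ℝ)^k * (B:ℝ)) ↔ A ≤ m ∧ m < B := by
  have hp := two_zpow_pos k
  simp only [Set.mem_Ico]
  constructor
  · rintro ⟨hA, hB⟩
    constructor
    · have hx : (2:ℝ)^k * (A:ℝ) < 2^k * ((m:ℝ)+1) := lt_of_le_of_lt hA h2
      have := (mul_lt_mul_iff_right₀ hp).1 hx
      have : (A:ℝ) < (m:ℝ) + 1 := this
      have : A < m + 1 := by exact_mod_cast this
      omega
    · have hx : (2:ℝ)^k * (m:ℝ) ≤ y := h1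
      have hx2 : (2:ℝ)^k * (m:ℝ) < 2^k * (B:ℝ) := lt_of_le_of_lt hx hB
      have := (mul_lt_mul_iff_right₀ hp).1 hx2
      exact_mod_cast this
  · rintro ⟨hA, hB⟩
    constructor
    · refine le_trans (mul_le_mul_of_nonneg_left ?_ hp.le) h1
      exact_mod_cast hA
    · refine lt_of_lt_of_le h2 (mul_le_mul_of_nonneg_left ?_ hp.le)
      have : m + 1 ≤ B := hB
      exact_mod_cast this

lemma cubeSet_nonempty {n : ℕ} (Q : Cube n) : (cubeSet Q).Nonempty := by
  refine ⟨center Q, cubeSet_def.2 fun i => ?_⟩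
  have hp := two_zpow_pos Q.1
  unfold _root_.center
  constructor
  · apply mul_le_mul_of_nonneg_left _ hp.le
    linarith
  · apply mul_lt_mul_of_pos_left _ hp
    linarith

lemma cubeSet_eq_pi {n : ℕ} (Q : Cube n) :
    cubeSet Q = Set.pi Set.univ
      (fun i => Ico ((2:ℝ)^Q.1 * Q.2 i) ((2:ℝ)^Q.1 * (Q.2 i + 1))) := by
  ext x
  simp [cubeSet, Set.mem_pi, Set.mem_Ico]

lemma measurableSet_cubeSet {n : ℕ} (Q : Cube n) : MeasurableSet (cubeSet Q) := by
  rw [cubeSet_eq_pi]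
  exact MeasurableSet.univ_pi fun i => measurableSet_Ico

lemma vol_pos {n : ℕ} (Q : Cube n) : 0 < vol Q := pow_pos (two_zpow_pos Q.1) n

lemma volume_cubeSet {n : ℕ} (Q : Cube n) :
    volume (cubeSet Q) = ENNReal.ofReal (vol Q) := by
  rw [cubeSet_eq_pi, volume_pi_pi]
  have h : ∀ i : Fin n, volume (Ico ((2:ℝ)^Q.1 * Q.2 i) ((2:ℝ)^Q.1 * (Q.2 i + 1)))
      = ENNReal.ofReal ((2:ℝ)^Q.1) := by
    intro i
    rw [Real.volume_Ico]
    congr 1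
    ring
  rw [Finset.prod_congr rfl (fun i _ => h i), Finset.prod_const,
    ← ENNReal.ofReal_pow (two_zpow_pos Q.1).le]
  simp [vol]

lemma subset_of_le {n : ℕ} {Q Q' : Cube n} (hk : Q.1 ≤ Q'.1) {x : Fin n → ℝ}
    (hx : x ∈ cubeSet Q) (hx' : x ∈ cubeSet Q') : cubeSet Q ⊆ cubeSet Q' := by
  intro y hy
  rw [cubeSet_def] at hx hx' hy ⊢
  intro i
  set d := (Q'.1 - Q.1).toNat with hdd
  have hd : Q'.1 = Q.1 + (d : ℤ) := by omega
  have e1 : (2:ℝ)^Q'.1 * (Q'.2 i : ℝ) = (2:ℝ)^Q.1 * (((2^d * Q'.2 i : ℤ)) : ℝ) := by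
    rw [hd, zpow_add₀ (two_ne_zero), zpow_natCast]
    push_cast
    ring
  have e2 : (2:ℝ)^Q'.1 * ((Q'.2 i : ℝ) + 1) = (2:ℝ)^Q.1 * (((2^d * (Q'.2 i + 1) : ℤ)) : ℝ) := by
    rw [hd, zpow_add₀ (two_ne_zero), zpow_natCast]
    push_cast
    ring
  have hc : x i ∈ Ico ((2:ℝ)^Q.1 * (((2^d * Q'.2 i : ℤ)):ℝ)) ((2:ℝ)^Q.1 * (((2^d * (Q'.2 i + 1) : ℤ)):ℝ)) := by
    rw [Set.mem_Ico, ← e1, ← e2]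
    exact hx' i
  have hint := (key1d (hx i).1 (hx i).2).1 hc
  have hy2 := (key1d (hy i).1 (hy i).2).2 hint
  rw [Set.mem_Ico, ← e1, ← e2] at hy2
  exact hy2

lemma le_of_subset {n : ℕ} (hn : n ≠ 0) {Q Q' : Cube n}
    (h : cubeSet Q ⊆ cubeSet Q') : Q.1 ≤ Q'.1 := by
  have hm := measure_mono (μ := volume) h
  rw [volume_cubeSet, volume_cubeSet,
    ENNReal.ofReal_le_ofReal_iff (vol_pos Q').le] at hm
  unfold vol at hm
  have h2 : (2:ℝ)^Q.1 ≤ 2^Q'.1 :=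
    (pow_le_pow_iff_left₀ (two_zpow_pos Q.1).le (two_zpow_pos Q'.1).le hn).1 hm
  exact (zpow_le_zpow_iff_right₀ (by norm_num : (1:ℝ) < 2)).1 h2

lemma eq_of_subset_of_gen_eq {n : ℕ} {Q Q' : Cube n}
    (h : cubeSet Q ⊆ cubeSet Q') (hk : Q.1 = Q'.1) : Q = Q' := by
  obtain ⟨y, hy⟩ := cubeSet_nonempty Q
  have hy' := h hy
  calc Q = dcube Q.1 y := eq_dcube hy
    _ = dcube Q'.1 y := by rw [hk]
    _ = Q' := (eq_dcube hy').symm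

lemma lt_of_ssubset {n : ℕ} (hn : n ≠ 0) {Q Q' : Cube n}
    (h : cubeSet Q ⊂ cubeSet Q') : Q.1 < Q'.1 := by
  rcases lt_or_eq_of_le (le_of_subset hn h.subset) with h1 | h1
  · exact h1
  · have heq := eq_of_subset_of_gen_eq h.subset h1
    rw [heq] at h
    exact absurd h (ssubset_irrefl _)

lemma trichotomy {n : ℕ} {Q Q' : Cube n} {x : Fin n → ℝ}
    (hx : x ∈ cubeSet Q) (hx' : x ∈ cubeSet Q') :
    cubeSet Q ⊆ cubeSet Q' ∨ cubeSet Q' ⊆ cubeSet Q := by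
  rcases le_total Q.1 Q'.1 with h | h
  · exact Or.inl (subset_of_le h hx hx')
  · exact Or.inr (subset_of_le h hx' hx)

lemma haar1_eq_zero {k m : ℤ} (e : Bool) {x : ℝ}
    (hx : ¬ ((2:ℝ)^k * m ≤ x ∧ x < (2:ℝ)^k * ((m:ℝ)+1))) : haar1 k m e x = 0 := by
  have hp := (two_zpow_pos k).le
  have hmid1 : (2:ℝ)^k * ((m:ℝ)+1/2) ≤ 2^k * ((m:ℝ)+1) :=
    mul_le_mul_of_nonneg_left (by linarith) hp
  have hmid0 : (2:ℝ)^k * (m:ℝ) ≤ 2^k * ((m:ℝ)+1/2) :=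
    mul_le_mul_of_nonneg_left (by linarith) hp
  have h0 : x ∉ Ico ((2:ℝ)^k * (m:ℝ)) ((2:ℝ)^k * ((m:ℝ)+1)) := by
    rw [Set.mem_Ico]; exact hx
  have h1 : x ∉ Ico ((2:ℝ)^k * (m:ℝ)) ((2:ℝ)^k * ((m:ℝ)+1/2)) := by
    rw [Set.mem_Ico]
    rintro ⟨a, b⟩
    exact hx ⟨a, lt_of_lt_of_le b hmid1⟩
  have h2 : x ∉ Ico ((2:ℝ)^k * ((m:ℝ)+1/2)) ((2:ℝ)^k * ((m:ℝ)+1)) := by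
    rw [Set.mem_Ico]
    rintro ⟨a, b⟩
    exact hx ⟨le_trans hmid0 a, b⟩
  unfold haar1
  cases e
  · rw [if_neg (by simp)]
    rw [Set.indicator_of_notMem h1, Set.indicator_of_notMem h2]
    ring
  · rw [if_pos rfl, Set.indicator_of_notMem h0]
    ring

lemma haar_eq_zero {n : ℕ} {Q₂ : Cube n} (ε : Fin n → Bool) {x : Fin n → ℝ}
    (hx : x ∉ cubeSet Q₂) : haar Q₂ ε x = 0 := by
  rw [cubeSet_def] at hx
  obtain ⟨i, hi⟩ := not_forall.1 hx
  unfold haar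
  exact Finset.prod_eq_zero (Finset.mem_univ i) (haar1_eq_zero (ε i) hi)

lemma haar1_const {k k₂ m m₂ : ℤ} (hk : k < k₂) (e : Bool) {y z : ℝ}
    (hy1 : (2:ℝ)^k * m ≤ y) (hy2 : y < (2:ℝ)^k * ((m:ℝ)+1))
    (hz1 : (2:ℝ)^k * m ≤ z) (hz2 : z < (2:ℝ)^k * ((m:ℝ)+1)) :
    haar1 k₂ m₂ e y = haar1 k₂ m₂ e z := by
  set d := (k₂ - k - 1).toNat with hdd
  have hd : k₂ = k + ((d + 1 : ℕ) : ℤ) := by omega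
  have h2 : (2:ℝ)^k₂ = 2^k * 2^(d+1) := by
    rw [hd, zpow_add₀ (two_ne_zero), zpow_natCast]
  have e0 : (2:ℝ)^k₂ * (m₂:ℝ) = 2^k * (((2^(d+1) * m₂ : ℤ)):ℝ) := by
    rw [h2]; push_cast; ring
  have eh : (2:ℝ)^k₂ * ((m₂:ℝ) + 1/2) = 2^k * (((2^d * (2*m₂+1) : ℤ)):ℝ) := by
    rw [h2, pow_succ]; push_cast; ring
  have e1 : (2:ℝ)^k₂ * ((m₂:ℝ) + 1) = 2^k * (((2^(d+1) * (m₂+1) : ℤ)):ℝ) := by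
    rw [h2]; push_cast; ring
  have key : ∀ A B : ℤ,
      (y ∈ Ico ((2:ℝ)^k * (A:ℝ)) ((2:ℝ)^k * (B:ℝ))) ↔
      (z ∈ Ico ((2:ℝ)^k * (A:ℝ)) ((2:ℝ)^k * (B:ℝ))) := fun A B =>
    (key1d hy1 hy2).trans (key1d hz1 hz2).symm
  unfold haar1
  cases e
  · rw [if_neg (by simp), if_neg (by simp)]
    rw [e0, eh, e1]
    simp only [Set.indicator_apply]
    rw [if_congr (key _ _) rfl rfl, if_congr (key _ _) rfl rfl]
  · rw [if_pos rfl, if_pos rfl]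
    rw [e0, e1]
    simp only [Set.indicator_apply]
    rw [if_congr (key _ _) rfl rfl]

lemma haar_const {n : ℕ} (hn : n ≠ 0) {Q Q₂ : Cube n}
    (h : cubeSet Q ⊂ cubeSet Q₂) (ε : Fin n → Bool) {y z : Fin n → ℝ}
    (hy : y ∈ cubeSet Q) (hz : z ∈ cubeSet Q) : haar Q₂ ε y = haar Q₂ ε z := by
  have hk : Q.1 < Q₂.1 := lt_of_ssubset hn h
  rw [cubeSet_def] at hy hz
  unfold haar
  exact Finset.prod_congr rfl fun i _ =>
    haar1_const hk (ε i) (hy i).1 (hy i).2 (hz i).1 (hz i).2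

lemma avg_indicator {n : ℕ} (Q₁ Q : Cube n) :
    avg ((cubeSet Q₁).indicator fun _ => (1:ℝ)) Q
      = (volume (cubeSet Q ∩ cubeSet Q₁)).toReal / vol Q := by
  unfold avg
  rw [setIntegral_indicator (measurableSet_cubeSet Q₁), setIntegral_const]
  simp
  rfl

lemma avg_ind_of_subset {n : ℕ} {Q₁ Q : Cube n} (h : cubeSet Q ⊆ cubeSet Q₁) :
    avg ((cubeSet Q₁).indicator fun _ => (1:ℝ)) Q = 1 := by
  rw [avg_indicator, Set.inter_eq_left.2 h, volume_cubeSet,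
    ENNReal.toReal_ofReal (vol_pos Q).le, div_self (vol_pos Q).ne']

lemma avg_ind_of_superset {n : ℕ} {Q₁ Q : Cube n} (h : cubeSet Q₁ ⊆ cubeSet Q) :
    avg ((cubeSet Q₁).indicator fun _ => (1:ℝ)) Q = vol Q₁ / vol Q := by
  rw [avg_indicator, Set.inter_eq_right.2 h, volume_cubeSet,
    ENNReal.toReal_ofReal (vol_pos Q₁).le]

lemma avg_ind_of_disjoint {n : ℕ} {Q₁ Q : Cube n} (h : cubeSet Q ∩ cubeSet Q₁ = ∅) :
    avg ((cubeSet Q₁).indicator fun _ => (1:ℝ)) Q = 0 := by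
  rw [avg_indicator, h]
  simp

lemma avg_haar_of_ssubset {n : ℕ} (hn : n ≠ 0) {Q Q₂ : Cube n}
    (h : cubeSet Q ⊂ cubeSet Q₂) (ε : Fin n → Bool) {x : Fin n → ℝ}
    (hx : x ∈ cubeSet Q) : avg (haar Q₂ ε) Q = haar Q₂ ε x := by
  unfold avg
  rw [setIntegral_congr_fun (measurableSet_cubeSet Q)
    (g := fun _ => haar Q₂ ε x) (fun y hy => haar_const hn h ε hy hx),
    setIntegral_const, measureReal_def, volume_cubeSet, ENNReal.toReal_ofReal (vol_pos Q).le,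
    smul_eq_mul]
  rw [mul_comm, mul_div_assoc, div_self (vol_pos Q).ne', mul_one]

lemma integrable_haar1 (k m : ℤ) (e : Bool) : Integrable (haar1 k m e) := by
  have h : ∀ a b : ℝ, Integrable ((Ico a b).indicator fun _ => (1:ℝ)) := fun a b => by
    rw [integrable_indicator_iff measurableSet_Ico]
    exact integrableOn_const measure_Ico_lt_top.ne
  unfold haar1
  cases e
  · simp only [Bool.false_eq_true, reduceIte]
    exact (((h _ _).sub (h _ _)).const_mul _)
  · simp only [reduceIte]
    exact ((h _ _).const_mul _)

lemma integral_haar1_false (k m : ℤ) : ∫ x, haar1 k m false x = 0 := by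
  have hp := (two_zpow_pos k).le
  have h : ∀ a b : ℝ, Integrable ((Ico a b).indicator fun _ => (1:ℝ)) := fun a b => by
    rw [integrable_indicator_iff measurableSet_Ico]
    exact integrableOn_const measure_Ico_lt_top.ne
  unfold haar1
  simp only [Bool.false_eq_true, if_false]
  have g1 : (0:ℝ) ≤ 2^k * ((m:ℝ)+1/2) - 2^k * m := by nlinarith [two_zpow_pos k]
  have g2 : (0:ℝ) ≤ 2^k * ((m:ℝ)+1) - 2^k * ((m:ℝ)+1/2) := by nlinarith [two_zpow_pos k]
  rw [MeasureTheory.integral_const_mul, integral_sub (h _ _) (h _ _),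
    integral_indicator measurableSet_Ico, integral_indicator measurableSet_Ico,
    setIntegral_const, setIntegral_const, measureReal_def, measureReal_def, Real.volume_Ico, Real.volume_Ico,
    ENNReal.toReal_ofReal g1, ENNReal.toReal_ofReal g2]
  simp only [smul_eq_mul, mul_one]
  ring

lemma integral_haar_eq_zero {n : ℕ} (Q₂ : Cube n) {ε : Fin n → Bool} (i₀ : Fin n)
    (h : ε i₀ = false) : ∫ x, haar Q₂ ε x = 0 := by
  unfold haar
  rw [volume_pi, MeasureTheory.integral_fintype_prod_eq_prod (ι := Fin n)
    (fun i => haar1 Q₂.1 (Q₂.2 i) (ε i))]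
  refine Finset.prod_eq_zero (Finset.mem_univ i₀) ?_
  rw [h, integral_haar1_false]

lemma avg_haar_of_superset {n : ℕ} {Q Q₂ : Cube n} (h : cubeSet Q₂ ⊆ cubeSet Q)
    {ε : Fin n → Bool} (i₀ : Fin n) (hi : ε i₀ = false) : avg (haar Q₂ ε) Q = 0 := by
  unfold avg
  rw [setIntegral_eq_integral_of_forall_compl_eq_zero
      (fun y hy => haar_eq_zero ε (fun hy2 => hy (h hy2))),
    integral_haar_eq_zero Q₂ i₀ hi, zero_div]

lemma avg_haar_of_disjoint {n : ℕ} {Q Q₂ : Cube n} (h : cubeSet Q ∩ cubeSet Q₂ = ∅)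
    (ε : Fin n → Bool) : avg (haar Q₂ ε) Q = 0 := by
  unfold avg
  rw [setIntegral_congr_fun (measurableSet_cubeSet Q) (g := fun _ => (0:ℝ))
      (fun y hy => haar_eq_zero ε
        (fun hy2 => Set.eq_empty_iff_forall_notMem.1 h y ⟨hy, hy2⟩))]
  simp

lemma vol_rpow {n : ℕ} (hn : n ≠ 0) (Q : Cube n) {α : ℝ} :
    vol Q ^ (α / n) = (2:ℝ) ^ ((Q.1:ℝ) * α) := by
  have h2 : (0:ℝ) ≤ 2 := by norm_num
  have hv : vol Q = (2:ℝ) ^ ((Q.1 : ℝ) * n) := by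
    unfold vol
    rw [← Real.rpow_intCast 2 Q.1, ← Real.rpow_natCast ((2:ℝ) ^ ((Q.1:ℤ):ℝ)) n,
      ← Real.rpow_mul h2]
  rw [hv, ← Real.rpow_mul h2]
  congr 1
  have hn' : (n:ℝ) ≠ 0 := Nat.cast_ne_zero.2 hn
  field_simp

end DyadicAux

end AuxSection

open DyadicAux in
/-- for dyadic cubes `Q₁ ⊊ Q₂` and a cancellative Haar function `h_{Q₂}^{ε₂}`,
`I_α^D(1_{Q₁}, h_{Q₂}^{ε₂}) = (1+c_α)|Q₁|^{α/n} h_{Q₂}^{ε₂} 1_{Q₁}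
  + |Q₁| Σ_{Q₁ ⊊ Q ⊊ Q₂} |Q|^{α/n} h_{Q₂}^{ε₂} 1_Q/|Q|`. -/
theorem statement6 {n : ℕ} (α : ℝ) (hα : 0 < α) (hαn : α < 2*n)
    (Q₁ Q₂ : Cube n) (hQ : cubeSet Q₁ ⊂ cubeSet Q₂)
    (ε₂ : Fin n → Bool) (hε₂ : ε₂ ≠ allOne n) (x : Fin n → ℝ) :
    IalphaBil α ((cubeSet Q₁).indicator (fun _ => (1:ℝ))) (haar Q₂ ε₂) x
      = (1 + calpha α) * vol Q₁ ^ (α / n) * haar Q₂ ε₂ x *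
          (cubeSet Q₁).indicator (fun _ => (1:ℝ)) x
        + vol Q₁ * ∑' Q : Cube n,
            (if cubeSet Q₁ ⊂ cubeSet Q ∧ cubeSet Q ⊂ cubeSet Q₂ then
              vol Q ^ (α / n) * haar Q₂ ε₂ x * (cubeSet Q).indicator (fun _ => (1:ℝ)) x / vol Q
            else 0) := by
  classical
  have hn : n ≠ 0 := by
    rcases Nat.eq_zero_or_pos n with h | h
    · subst h; norm_num at hαn; linarith
    · omega
  obtain ⟨i₀, hi₀⟩ : ∃ i, ε₂ i = false := by
    by_contra hc
    push_neg at hc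
    refine hε₂ (funext fun i => ?_)
    have := hc i
    revert this
    cases ε₂ i <;> simp [allOne]
  have hQ₁₂ : cubeSet Q₁ ⊆ cubeSet Q₂ := hQ.subset
  have hne₁ : (cubeSet Q₁).Nonempty := cubeSet_nonempty Q₁
  set g : Cube n → ℝ := fun Q =>
      if x ∈ cubeSet Q ∧ cubeSet Q ⊆ cubeSet Q₁ then vol Q ^ (α/(n:ℝ)) * haar Q₂ ε₂ x else 0
    with hgdef
  set b : Cube n → ℝ := fun Q =>
      if x ∈ cubeSet Q ∧ cubeSet Q₁ ⊂ cubeSet Q ∧ cubeSet Q ⊂ cubeSet Q₂ then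
        vol Q₁ * (vol Q ^ (α/(n:ℝ)) * haar Q₂ ε₂ x / vol Q) else 0
    with hbdef
  -- pointwise decomposition of the summand
  have hterm : ∀ Q : Cube n,
      vol Q ^ (α/(n:ℝ)) * avg ((cubeSet Q₁).indicator (fun _ => (1:ℝ))) Q * avg (haar Q₂ ε₂) Q *
        (cubeSet Q).indicator (fun _ => (1:ℝ)) x = g Q + b Q := by
    intro Q
    by_cases hxQ : x ∈ cubeSet Q
    swap
    · rw [Set.indicator_of_notMem hxQ]
      simp only [hgdef, hbdef]
      rw [if_neg (fun hc => hxQ hc.1), if_neg (fun hc => hxQ hc.1)]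
      ring
    rw [Set.indicator_of_mem hxQ]
    by_cases hd : cubeSet Q ∩ cubeSet Q₁ = ∅
    · have hnsub : ¬ (cubeSet Q ⊆ cubeSet Q₁) := fun hs =>
        Set.eq_empty_iff_forall_notMem.1 hd x ⟨hxQ, hs hxQ⟩
      have hnsub2 : ¬ (cubeSet Q₁ ⊂ cubeSet Q) := fun hs => by
        obtain ⟨y, hy⟩ := hne₁
        exact Set.eq_empty_iff_forall_notMem.1 hd y ⟨hs.subset hy, hy⟩
      rw [avg_ind_of_disjoint hd]
      simp only [hgdef, hbdef]
      rw [if_neg (fun hc => hnsub hc.2), if_neg (fun hc => hnsub2 hc.2.1)]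
      ring
    · by_cases hsub : cubeSet Q ⊆ cubeSet Q₁
      · -- Q ⊆ Q₁ ⊂ Q₂
        have hss2 : cubeSet Q ⊂ cubeSet Q₂ := ssubset_of_subset_of_ssubset hsub hQ
        rw [avg_ind_of_subset hsub, avg_haar_of_ssubset hn hss2 ε₂ hxQ]
        simp only [hgdef, hbdef]
        rw [if_pos ⟨hxQ, hsub⟩,
          if_neg (fun hc => (ssubset_iff_subset_not_subset.1 hc.2.1).2 hsub)]
        ring
      · -- Q₁ ⊊ Q
        have hint : (cubeSet Q ∩ cubeSet Q₁).Nonempty := Set.nonempty_iff_ne_empty.2 hd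
        have hQ₁Q : cubeSet Q₁ ⊆ cubeSet Q := by
          obtain ⟨y, hy⟩ := hint
          rcases trichotomy hy.1 hy.2 with hc | hc
          · exact absurd hc hsub
          · exact hc
        have hssQ₁Q : cubeSet Q₁ ⊂ cubeSet Q :=
          ssubset_iff_subset_not_subset.2 ⟨hQ₁Q, hsub⟩
        rw [avg_ind_of_superset hQ₁Q]
        by_cases hsup : cubeSet Q₂ ⊆ cubeSet Q
        · rw [avg_haar_of_superset hsup i₀ hi₀]
          simp only [hgdef, hbdef]
          rw [if_neg (fun hc => hsub hc.2),
            if_neg (fun hc => (ssubset_iff_subset_not_subset.1 hc.2.2).2 hsup)]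
          ring
        · have hQsubQ₂ : cubeSet Q ⊆ cubeSet Q₂ := by
            obtain ⟨y, hy⟩ := hne₁
            rcases trichotomy (hQ₁Q hy) (hQ₁₂ hy) with hc | hc
            · exact hc
            · exact absurd hc hsup
          have hssQQ₂ : cubeSet Q ⊂ cubeSet Q₂ :=
            ssubset_iff_subset_not_subset.2 ⟨hQsubQ₂, hsup⟩
          rw [avg_haar_of_ssubset hn hssQQ₂ ε₂ hxQ]
          simp only [hgdef, hbdef]
          rw [if_neg (fun hc => hsub hc.2), if_pos ⟨hxQ, hssQ₁Q, hssQQ₂⟩]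
          ring
  -- summability of b
  have hbsum : Summable b := by
    have hbsupp : Function.support b ⊆ (fun k => dcube k x) '' (Set.Icc Q₁.1 Q₂.1) := by
      intro Q hQ'
      rw [Function.mem_support] at hQ'
      have hcond : x ∈ cubeSet Q ∧ cubeSet Q₁ ⊂ cubeSet Q ∧ cubeSet Q ⊂ cubeSet Q₂ := by
        by_contra hc
        exact hQ' (by simp only [hbdef]; exact if_neg hc)
      obtain ⟨hx1, hs1, hs2⟩ := hcond
      exact ⟨Q.1, ⟨le_of_subset hn hs1.subset, le_of_subset hn hs2.subset⟩,
        (eq_dcube hx1).symm⟩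
    have hfin : (Function.support b).Finite :=
      ((Set.finite_Icc Q₁.1 Q₂.1).image _).subset hbsupp
    refine summable_of_ne_finset_zero (s := hfin.toFinset) fun Q hQ' => ?_
    by_contra h0
    exact hQ' (hfin.mem_toFinset.2 h0)
  -- value of the b-sum
  have htb : ∑' Q, b Q = vol Q₁ * ∑' Q : Cube n,
      (if cubeSet Q₁ ⊂ cubeSet Q ∧ cubeSet Q ⊂ cubeSet Q₂ then
        vol Q ^ (α/(n:ℝ)) * haar Q₂ ε₂ x * (cubeSet Q).indicator (fun _ => (1:ℝ)) x / vol Q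
      else 0) := by
    rw [← tsum_mul_left]
    refine tsum_congr fun Q => ?_
    simp only [hbdef]
    by_cases hxQ : x ∈ cubeSet Q
    · by_cases hc : cubeSet Q₁ ⊂ cubeSet Q ∧ cubeSet Q ⊂ cubeSet Q₂
      · rw [if_pos (show x ∈ cubeSet Q ∧ _ ∧ _ from ⟨hxQ, hc.1, hc.2⟩), if_pos hc,
          Set.indicator_of_mem hxQ]
        ring
      · rw [if_neg (fun hcc => hc ⟨hcc.2.1, hcc.2.2⟩), if_neg hc, mul_zero]
    · rw [if_neg (fun hcc => hxQ hcc.1), Set.indicator_of_notMem hxQ]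
      split
      · simp
      · simp
  -- the geometric series
  have hr1 : (0:ℝ) < (2:ℝ)^(-α) := Real.rpow_pos_of_pos two_pos _
  have hrlt : (2:ℝ)^(-α) < 1 :=
    Real.rpow_lt_one_of_one_lt_of_neg one_lt_two (by linarith)
  have hgeo : Summable (fun j : ℕ => ((2:ℝ)^(-α))^j) :=
    summable_geometric_of_lt_one hr1.le hrlt
  have hfrw : ∀ j : ℕ, (2:ℝ) ^ (((Q₁.1:ℝ) - j) * α)
      = (2:ℝ)^((Q₁.1:ℝ)*α) * ((2:ℝ)^(-α))^j := by
    intro j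
    rw [← Real.rpow_natCast ((2:ℝ)^(-α)) j, ← Real.rpow_mul (by norm_num),
      ← Real.rpow_add (by norm_num)]
    congr 1
    ring
  have hsplit : ∑' j : ℕ, ((2:ℝ)^(-α))^j = 1 + calpha α := by
    rw [hgeo.tsum_eq_zero_add, pow_zero]
    unfold calpha
    congr 1
    refine tsum_congr fun j => ?_
    rw [← Real.rpow_natCast ((2:ℝ)^(-α)) (j+1), ← Real.rpow_mul (by norm_num)]
    congr 1
    push_cast
    ring
  -- value and summability of the g-sum
  have hmain : Summable g ∧ ∑' Q, g Q = (1 + calpha α) * vol Q₁ ^ (α/(n:ℝ)) * haar Q₂ ε₂ x *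
      (cubeSet Q₁).indicator (fun _ => (1:ℝ)) x := by
    by_cases hx₁ : x ∈ cubeSet Q₁
    · have hinj : Function.Injective (fun j : ℕ => dcube (Q₁.1 - j) x) := by
        intro a c hac
        have : Q₁.1 - (a:ℤ) = Q₁.1 - (c:ℤ) := congrArg Prod.fst hac
        omega
      have hsupp : Function.support g ⊆ Set.range (fun j : ℕ => dcube (Q₁.1 - j) x) := by
        intro Q hQ'
        rw [Function.mem_support] at hQ'
        have hcond : x ∈ cubeSet Q ∧ cubeSet Q ⊆ cubeSet Q₁ := by
          by_contra hc
          exact hQ' (by simp only [hgdef]; exact if_neg hc)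
        obtain ⟨hx1, hsub⟩ := hcond
        have hk : Q.1 ≤ Q₁.1 := le_of_subset hn hsub
        refine ⟨(Q₁.1 - Q.1).toNat, ?_⟩
        have hq : Q₁.1 - ((Q₁.1 - Q.1).toNat : ℤ) = Q.1 := by omega
        show dcube (Q₁.1 - ((Q₁.1 - Q.1).toNat : ℤ)) x = Q
        rw [hq]
        exact (eq_dcube hx1).symm
      have hval : ∀ j : ℕ, g (dcube (Q₁.1 - j) x)
          = (2:ℝ) ^ (((Q₁.1:ℝ) - j) * α) * haar Q₂ ε₂ x := by
        intro j
        have hxd : x ∈ cubeSet (dcube (Q₁.1 - j) x) := mem_dcube _ _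
        have hsub : cubeSet (dcube (Q₁.1 - j) x) ⊆ cubeSet Q₁ :=
          subset_of_le (by show Q₁.1 - (j:ℤ) ≤ Q₁.1; omega) hxd hx₁
        simp only [hgdef]
        rw [if_pos (show _ ∧ _ from ⟨hxd, hsub⟩), vol_rpow hn]
        have hfst : (((dcube (Q₁.1 - (j:ℤ)) x).1 : ℤ) : ℝ) = (Q₁.1:ℝ) - j := by
          show ((Q₁.1 - (j:ℤ) : ℤ) : ℝ) = (Q₁.1:ℝ) - j
          push_cast
          ring
        rw [hfst]
      have hsum_e : Summable (fun j : ℕ => g (dcube (Q₁.1 - j) x)) := by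
        simp only [hval, hfrw]
        exact (hgeo.mul_left _).mul_right _
      have hzero : ∀ Q ∉ Set.range (fun j : ℕ => dcube (Q₁.1 - j) x), g Q = 0 := by
        intro Q hQ'
        by_contra h0
        exact hQ' (hsupp h0)
      constructor
      · exact (Function.Injective.summable_iff hinj hzero).1 hsum_e
      · rw [← Function.Injective.tsum_eq hinj hsupp]
        have : ∑' j : ℕ, g (dcube (Q₁.1 - j) x)
            = ∑' j : ℕ, (2:ℝ)^((Q₁.1:ℝ)*α) * ((2:ℝ)^(-α))^j * haar Q₂ ε₂ x := by
          refine tsum_congr fun j => ?_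
          rw [hval j, hfrw j]
        rw [this, tsum_mul_right, tsum_mul_left, hsplit, Set.indicator_of_mem hx₁,
          vol_rpow hn]
        ring
    · have hg0 : ∀ Q, g Q = 0 := fun Q => by
        simp only [hgdef]
        exact if_neg (fun hc => hx₁ (hc.2 hc.1))
      constructor
      · exact (funext hg0 : g = fun _ => 0) ▸ summable_zero
      · rw [tsum_congr hg0, tsum_zero, Set.indicator_of_notMem hx₁]
        ring
  obtain ⟨hgsum, htg⟩ := hmain
  unfold IalphaBil
  calc (∑' Q : Cube n, vol Q ^ (α/(n:ℝ)) *
          avg ((cubeSet Q₁).indicator (fun _ => (1:ℝ))) Q * avg (haar Q₂ ε₂) Q *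
          (cubeSet Q).indicator (fun _ => (1:ℝ)) x)
      = ∑' Q : Cube n, (g Q + b Q) := tsum_congr hterm
    _ = (∑' Q, g Q) + ∑' Q, b Q := hgsum.tsum_add hbsum
    _ = _ := by rw [htg, htb]
end

section
/- Let 1 < p₁, p₂ < ∞, 1/q = 1/p₁ + 1/p₂ − α/n > 0, 0 < α < 2n, and D a dyadic grid on ℝⁿ. If the bilinear commutator [b, I_α^D]₁ is bounded from L^{p₁} × L^{p₂} to L^q with norm N, then ‖b‖_{BMO_D} ≤ C N, where BMO_D is dyadic BMO. -/
open MeasureTheory Set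
open scoped ENNReal Classical

section Helpers
open Function
variable {n : ℕ}

lemma cubeSet_eq_pi (Q : Cube n) : cubeSet Q =
    Set.pi Set.univ (fun i => Set.Ico ((2:ℝ)^Q.1 * Q.2 i) ((2:ℝ)^Q.1 * (Q.2 i + 1))) := by
  ext x; simp [cubeSet, Set.mem_pi]

lemma measurableSet_cubeSet (Q : Cube n) : MeasurableSet (cubeSet Q) := by
  rw [cubeSet_eq_pi]; exact MeasurableSet.univ_pi (fun i => measurableSet_Ico)

lemma vol_pos (Q : Cube n) : 0 < vol Q := by
  have : (0:ℝ) < (2:ℝ)^Q.1 := zpow_pos (by norm_num) _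
  exact pow_pos this n

lemma volume_cubeSet (Q : Cube n) : volume (cubeSet Q) = ENNReal.ofReal (vol Q) := by
  rw [cubeSet_eq_pi, volume_pi_pi]
  have h : ∀ i : Fin n, volume (Set.Ico ((2:ℝ)^Q.1 * Q.2 i) ((2:ℝ)^Q.1 * (Q.2 i + 1)))
      = ENNReal.ofReal ((2:ℝ)^Q.1) := by
    intro i; rw [Real.volume_Ico]; ring_nf
  simp only [h, Finset.prod_const, Finset.card_univ, Fintype.card_fin]
  rw [← ENNReal.ofReal_pow (by positivity)]; rfl

lemma mem_cubeSet_iff {Q : Cube n} {x : Fin n → ℝ} :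
    x ∈ cubeSet Q ↔ ∀ i, (2:ℝ)^Q.1 * Q.2 i ≤ x i ∧ x i < (2:ℝ)^Q.1 * (Q.2 i + 1) := Iff.rfl

lemma eq_floor_of_mem {Q : Cube n} {x : Fin n → ℝ} (hx : x ∈ cubeSet Q) (i : Fin n) :
    Q.2 i = ⌊x i / (2:ℝ)^Q.1⌋ := by
  have h2 : (0:ℝ) < (2:ℝ)^Q.1 := zpow_pos (by norm_num) _
  obtain ⟨h1, h3⟩ := hx i
  symm; rw [Int.floor_eq_iff]
  constructor
  · rw [le_div_iff₀ h2]; linarith [h1]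
  · rw [div_lt_iff₀ h2]; push_cast; linarith [h3]

lemma mem_floorCube (g : ℤ) (x : Fin n → ℝ) :
    x ∈ cubeSet (g, fun i => ⌊x i / (2:ℝ)^g⌋) := by
  intro i
  have h2 : (0:ℝ) < (2:ℝ)^g := zpow_pos (by norm_num) _
  constructor
  · have := Int.floor_le (x i / (2:ℝ)^g)
    calc (2:ℝ)^g * (⌊x i / (2:ℝ)^g⌋:ℝ) ≤ (2:ℝ)^g * (x i / (2:ℝ)^g) := by
          exact mul_le_mul_of_nonneg_left this h2.le
      _ = x i := by field_simp
  · have := Int.lt_floor_add_one (x i / (2:ℝ)^g)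
    calc x i = (2:ℝ)^g * (x i / (2:ℝ)^g) := by field_simp
      _ < (2:ℝ)^g * ((⌊x i / (2:ℝ)^g⌋:ℝ) + 1) := by
          apply mul_lt_mul_of_pos_left _ h2
          push_cast; exact this

lemma subset_of_le_of_inter {Q Q' : Cube n} (hk : Q.1 ≤ Q'.1)
    (hne : (cubeSet Q ∩ cubeSet Q').Nonempty) : cubeSet Q ⊆ cubeSet Q' := by
  obtain ⟨y, hyQ, hyQ'⟩ := hne
  set D : ℕ := (Q'.1 - Q.1).toNat with hD
  have hDeq : Q'.1 = Q.1 + (D:ℤ) := by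
    rw [hD, Int.toNat_of_nonneg (by omega)]; ring
  have hu : (0:ℝ) < (2:ℝ)^Q.1 := zpow_pos (by norm_num) _
  have he : (2:ℝ)^Q'.1 = (2:ℝ)^Q.1 * (2:ℝ)^D := by
    rw [hDeq, zpow_add₀ (by norm_num : (2:ℝ) ≠ 0), zpow_natCast]
  intro x hx
  intro i
  obtain ⟨ha, hb⟩ := hyQ i
  obtain ⟨ha', hb'⟩ := hyQ' i
  obtain ⟨hxa, hxb⟩ := hx i
  -- integer inequalities
  have key1 : (2:ℤ)^D * Q'.2 i ≤ Q.2 i := by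
    have : (2:ℝ)^Q.1 * ((2:ℤ)^D * Q'.2 i : ℤ) < (2:ℝ)^Q.1 * ((Q.2 i : ℝ) + 1) := by
      push_cast
      calc (2:ℝ)^Q.1 * ((2:ℝ)^D * (Q'.2 i : ℝ)) = (2:ℝ)^Q'.1 * Q'.2 i := by rw [he]; ring
        _ ≤ y i := ha'
        _ < (2:ℝ)^Q.1 * ((Q.2 i : ℝ) + 1) := hb
    have h2 : ((2:ℤ)^D * Q'.2 i : ℝ) < (Q.2 i : ℝ) + 1 := by
      have := (mul_lt_mul_iff_right₀ hu).mp this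
      push_cast at this ⊢; linarith
    have : ((2:ℤ)^D * Q'.2 i : ℤ) < Q.2 i + 1 := by exact_mod_cast h2
    omega
  have key2 : Q.2 i + 1 ≤ (2:ℤ)^D * (Q'.2 i + 1) := by
    have : (2:ℝ)^Q.1 * (Q.2 i : ℝ) < (2:ℝ)^Q.1 * ((2:ℤ)^D * (Q'.2 i + 1) : ℤ) := by
      push_cast
      calc (2:ℝ)^Q.1 * (Q.2 i : ℝ) ≤ y i := ha
        _ < (2:ℝ)^Q'.1 * (Q'.2 i + 1) := hb'
        _ = (2:ℝ)^Q.1 * ((2:ℝ)^D * ((Q'.2 i : ℝ) + 1)) := by rw [he]; ring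
    have h2 : (Q.2 i : ℝ) < ((2:ℤ)^D * (Q'.2 i + 1) : ℤ) := by
      have := (mul_lt_mul_iff_right₀ hu).mp this
      exact_mod_cast this
    have : Q.2 i < (2:ℤ)^D * (Q'.2 i + 1) := by exact_mod_cast h2
    omega
  have e1 : (2:ℝ)^Q'.1 * (Q'.2 i : ℝ) ≤ x i := by
    calc (2:ℝ)^Q'.1 * (Q'.2 i : ℝ) = (2:ℝ)^Q.1 * (((2:ℤ)^D * Q'.2 i : ℤ) : ℝ) := by
          push_cast; rw [he]; ring
      _ ≤ (2:ℝ)^Q.1 * (Q.2 i : ℝ) := by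
          apply mul_le_mul_of_nonneg_left _ hu.le; exact_mod_cast key1
      _ ≤ x i := hxa
  have e2 : x i < (2:ℝ)^Q'.1 * ((Q'.2 i : ℝ) + 1) := by
    calc x i < (2:ℝ)^Q.1 * ((Q.2 i : ℝ) + 1) := hxb
      _ ≤ (2:ℝ)^Q.1 * (((2:ℤ)^D * (Q'.2 i + 1) : ℤ) : ℝ) := by
          apply mul_le_mul_of_nonneg_left _ hu.le
          exact_mod_cast key2
      _ = (2:ℝ)^Q'.1 * ((Q'.2 i : ℝ) + 1) := by push_cast; rw [he]; ring
  exact ⟨e1, e2⟩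

lemma gen_le_of_subset {Q Q' : Cube n} (hn : 0 < n) (h : cubeSet Q ⊆ cubeSet Q') :
    Q.1 ≤ Q'.1 := by
  have hv := measure_mono (μ := volume) h
  rw [volume_cubeSet, volume_cubeSet] at hv
  have hv' : vol Q ≤ vol Q' := by
    rwa [ENNReal.ofReal_le_ofReal_iff (vol_pos Q').le] at hv
  have h2 : (2:ℝ)^Q.1 ≤ (2:ℝ)^Q'.1 := by
    exact (pow_le_pow_iff_left₀ (le_of_lt (zpow_pos (by norm_num) _))
      (le_of_lt (zpow_pos (by norm_num) _)) (by omega)).mp hv'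
  by_contra hc
  push_neg at hc
  have : (2:ℝ)^Q'.1 < (2:ℝ)^Q.1 := zpow_lt_zpow_right₀ (by norm_num) hc
  linarith

end Helpers

/-- if the bilinear commutator `[b, I_α^D]₁` is bounded from
`L^{p₁} × L^{p₂}` to `L^q` with norm `N`, then `‖b‖_{BMO_D} ≤ C N`. -/
theorem statement16 {n : ℕ} (α p₁ p₂ q : ℝ) (hp₁ : 1 < p₁) (hp₂ : 1 < p₂)
    (hα : 0 < α) (hα2 : α < 2*n) (hq : 1/q = 1/p₁ + 1/p₂ - α/n) (hq0 : 0 < 1/q) :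
    ∃ C : ℝ, 0 < C ∧ ∀ (b : (Fin n → ℝ) → ℝ) (N : ℝ),
      LocallyIntegrable b volume → 0 ≤ N →
      (∀ f₁ f₂ : (Fin n → ℝ) → ℝ, Measurable f₁ → Measurable f₂ →
        (∫⁻ x, ENNReal.ofReal (|b x * IalphaBil α f₁ f₂ x
            - IalphaBil α (fun y => b y * f₁ y) f₂ x| ^ q)) ^ (1/q)
          ≤ ENNReal.ofReal N * (∫⁻ x, ENNReal.ofReal (|f₁ x| ^ p₁)) ^ (1/p₁)
              * (∫⁻ x, ENNReal.ofReal (|f₂ x| ^ p₂)) ^ (1/p₂)) →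
      (⨆ J : Cube n, (∫⁻ x in cubeSet J, ENNReal.ofReal |b x - avg b J|)
          / ENNReal.ofReal (vol J)) ≤ ENNReal.ofReal (C * N) := by
  classical
  -- basic positivity facts
  have hn : 0 < n := by
    rcases Nat.eq_zero_or_pos n with h | h
    · exfalso; rw [h] at hα2; push_cast at hα2; linarith
    · exact h
  have hnR : (0:ℝ) < n := by exact_mod_cast hn
  have hq' : 0 < q := one_div_pos.mp hq0
  have hp₁0 : 0 < p₁ := lt_trans one_pos hp₁
  have hp₂0 : 0 < p₂ := lt_trans one_pos hp₂
  refine ⟨2 * 4^n, by positivity, ?_⟩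
  intro b N hb hN hcomm
  refine iSup_le fun J => ?_
  set k : ℤ := J.1 with hk
  set t : ℝ := vol J with htdef
  have ht : 0 < t := vol_pos J
  -- measurable representative of b
  have hbm : AEStronglyMeasurable b volume := hb.aestronglyMeasurable
  set b' : (Fin n → ℝ) → ℝ := hbm.mk b with hb'def
  have hb'meas : Measurable b' := hbm.stronglyMeasurable_mk.measurable
  have hbae : b =ᵐ[volume] b' := hbm.ae_eq_mk
  set c : ℝ := avg b J with hcdef
  set σ : (Fin n → ℝ) → ℝ := fun x => if 0 ≤ b' x - c then 1 else -1 with hσdef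
  have hσmeas : Measurable σ := by
    apply Measurable.ite _ measurable_const measurable_const
    exact measurableSet_le measurable_const (hb'meas.sub measurable_const)
  have hσ1 : ∀ x, |σ x| ≤ 1 := by
    intro x; simp only [hσdef]; split_ifs <;> simp
  have hσb : ∀ x, σ x * (b' x - c) = |b' x - c| := by
    intro x; simp only [hσdef]; split_ifs with h
    · rw [abs_of_nonneg h]; ring
    · rw [abs_of_neg (not_le.mp h)]; ring
  set sbar : ℝ := (∫ x in cubeSet J, σ x) / t with hsbardef
  set g : (Fin n → ℝ) → ℝ := fun x => σ x - sbar with hgdef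
  set f₁ : (Fin n → ℝ) → ℝ := (cubeSet J).indicator g with hf₁def
  -- sibling and parent
  set i0 : Fin n := ⟨0, hn⟩ with hi0def
  set S : Cube n := (k, fun i => if i = i0 then J.2 i0 + 1 - 2 * (J.2 i0 % 2) else J.2 i) with hSdef
  set P : Cube n := (k+1, fun i => (J.2 i).fdiv 2) with hPdef
  set f₂ : (Fin n → ℝ) → ℝ := (cubeSet S).indicator (fun _ => (1:ℝ)) with hf₂def
  have hfd : ∀ z : ℤ, 2 * z.fdiv 2 + z % 2 = z ∧ 0 ≤ z % 2 ∧ z % 2 < 2 := by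
    intro z
    rw [Int.fdiv_eq_ediv_of_nonneg _ (by norm_num)]
    have h1 := Int.mul_ediv_add_emod z 2
    have h2 := Int.emod_nonneg z (by norm_num : (2:ℤ) ≠ 0)
    have h3 := Int.emod_lt_of_pos z (by norm_num : (0:ℤ) < 2)
    omega
  have h2k : (0:ℝ) < (2:ℝ)^k := zpow_pos (by norm_num) _
  have h2k1 : ((2:ℝ):ℝ)^(k+1) = (2:ℝ)^k * 2 := by
    rw [zpow_add_one₀ (by norm_num : (2:ℝ) ≠ 0)]
  have hJP : cubeSet J ⊆ cubeSet P := by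
    intro x hx i
    obtain ⟨h1, h2⟩ := hx i
    have hf := hfd (J.2 i)
    constructor
    · calc (2:ℝ)^P.1 * (P.2 i : ℝ) = (2:ℝ)^k * ((2 * (J.2 i).fdiv 2 : ℤ) : ℝ) := by
            show (2:ℝ)^(k+1) * _ = _
            rw [h2k1]; push_cast; ring
        _ ≤ (2:ℝ)^k * (J.2 i : ℝ) := by
            apply mul_le_mul_of_nonneg_left _ h2k.le
            exact_mod_cast (by omega : 2 * (J.2 i).fdiv 2 ≤ J.2 i)
        _ ≤ x i := h1
    · calc x i < (2:ℝ)^k * ((J.2 i : ℝ) + 1) := h2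
        _ ≤ (2:ℝ)^k * (((2 * (J.2 i).fdiv 2 + 2 : ℤ)) : ℝ) := by
            apply mul_le_mul_of_nonneg_left _ h2k.le
            exact_mod_cast (by omega : J.2 i + 1 ≤ 2 * (J.2 i).fdiv 2 + 2)
        _ = (2:ℝ)^P.1 * ((P.2 i : ℝ) + 1) := by
            show _ = (2:ℝ)^(k+1) * _
            rw [h2k1]; push_cast; ring
  have hSP : cubeSet S ⊆ cubeSet P := by
    intro x hx i
    obtain ⟨h1, h2⟩ := hx i
    have hf := hfd (J.2 i)
    have hr := Int.emod_nonneg (J.2 i0) (by norm_num : (2:ℤ) ≠ 0)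
    have hr2 := Int.emod_lt_of_pos (J.2 i0) (by norm_num : (0:ℤ) < 2)
    have hfi0 := hfd (J.2 i0)
    have hSval : S.2 i = if i = i0 then J.2 i0 + 1 - 2 * (J.2 i0 % 2) else J.2 i := rfl
    have hSbound : 2 * (J.2 i).fdiv 2 ≤ S.2 i ∧ S.2 i + 1 ≤ 2 * (J.2 i).fdiv 2 + 2 := by
      rw [hSval]
      split_ifs with h
      · subst h; omega
      · omega
    constructor
    · calc (2:ℝ)^P.1 * (P.2 i : ℝ) = (2:ℝ)^k * ((2 * (J.2 i).fdiv 2 : ℤ) : ℝ) := by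
            show (2:ℝ)^(k+1) * _ = _
            rw [h2k1]; push_cast; ring
        _ ≤ (2:ℝ)^k * (S.2 i : ℝ) := by
            apply mul_le_mul_of_nonneg_left _ h2k.le; exact_mod_cast hSbound.1
        _ ≤ x i := h1
    · calc x i < (2:ℝ)^S.1 * ((S.2 i : ℝ) + 1) := h2
        _ ≤ (2:ℝ)^k * (((2 * (J.2 i).fdiv 2 + 2 : ℤ)) : ℝ) := by
            apply mul_le_mul_of_nonneg_left _ h2k.le
            exact_mod_cast hSbound.2
        _ = (2:ℝ)^P.1 * ((P.2 i : ℝ) + 1) := by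
            show _ = (2:ℝ)^(k+1) * _
            rw [h2k1]; push_cast; ring
  have hJS : cubeSet J ∩ cubeSet S = ∅ := by
    rw [Set.eq_empty_iff_forall_notMem]
    rintro x ⟨hxJ, hxS⟩
    have e1 := eq_floor_of_mem hxJ i0
    have e2 := eq_floor_of_mem hxS i0
    have heq : J.2 i0 = S.2 i0 := by rw [e1, e2]
    have hS2 : S.2 i0 = J.2 i0 + 1 - 2 * (J.2 i0 % 2) := by simp [hSdef]
    have hr := Int.emod_nonneg (J.2 i0) (by norm_num : (2:ℤ) ≠ 0)
    have hr2 := Int.emod_lt_of_pos (J.2 i0) (by norm_num : (0:ℤ) < 2)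
    omega
  -- integrability on J
  have hvolJfin : volume (cubeSet J) < ⊤ := by
    rw [volume_cubeSet]; exact ENNReal.ofReal_lt_top
  have hvolJ : volume (cubeSet J) = ENNReal.ofReal t := volume_cubeSet J
  have hvolJtoReal : (volume (cubeSet J)).toReal = t := by
    rw [hvolJ, ENNReal.toReal_ofReal ht.le]
  have hbJ : IntegrableOn b (cubeSet J) volume := by
    apply IntegrableOn.mono_set (t := Set.pi Set.univ (fun i => Set.Icc ((2:ℝ)^k * J.2 i) ((2:ℝ)^k * (J.2 i + 1))))
    · apply hb.integrableOn_isCompact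
      exact isCompact_univ_pi (fun i => isCompact_Icc)
    · rw [cubeSet_eq_pi]
      exact Set.pi_mono (fun i _ => Set.Ico_subset_Icc_self)
  have hconst_int : ∀ C : ℝ, IntegrableOn (fun _ => C) (cubeSet J) volume :=
    fun C => integrableOn_const hvolJfin.ne
  have hσint : IntegrableOn σ (cubeSet J) volume := by
    apply Integrable.mono' (hconst_int 1) (hσmeas.aestronglyMeasurable.restrict)
    exact Filter.Eventually.of_forall (fun x => by simpa using hσ1 x)
  have hIσ : ∫ x in cubeSet J, σ x = sbar * t := by
    rw [hsbardef]; field_simp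
  have hI1 : ∫ x in cubeSet J, (1:ℝ) = t := by
    rw [setIntegral_const, measureReal_def, hvolJtoReal, smul_eq_mul, mul_one]
  have hIb : ∫ x in cubeSet J, b x = c * t := by
    rw [hcdef]; show _ = (∫ x in cubeSet J, b x) / vol J * t
    rw [← htdef]; field_simp
  have hIg : ∫ x in cubeSet J, g x = 0 := by
    rw [hgdef]
    rw [integral_sub hσint (hconst_int sbar)]
    rw [hIσ, setIntegral_const, measureReal_def, hvolJtoReal, smul_eq_mul]
    ring
  set B : ℝ := ∫ x in cubeSet J, |b x - c| with hBdef
  have hB0 : 0 ≤ B := setIntegral_nonneg (measurableSet_cubeSet J) (fun x _ => abs_nonneg _)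
  have hbc_int : IntegrableOn (fun x => b x - c) (cubeSet J) volume := hbJ.sub (hconst_int c)
  have hσbc_int : IntegrableOn (fun x => σ x * (b x - c)) (cubeSet J) volume := by
    apply Integrable.bdd_mul (c := 1) hbc_int (hσmeas.aestronglyMeasurable.restrict)
    exact Filter.Eventually.of_forall (fun x => by simpa using hσ1 x)
  have hIbg : ∫ x in cubeSet J, b x * g x = B := by
    have hpt : ∀ x, b x * g x = σ x * (b x - c) + (c * σ x - sbar * b x) := by
      intro x; rw [hgdef]; ring
    rw [integral_congr_ae (Filter.Eventually.of_forall (fun x => hpt x))]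
    have hcσ_int : IntegrableOn (fun x => c * σ x - sbar * b x) (cubeSet J) volume :=
      (hσint.const_mul c).sub (hbJ.const_mul sbar)
    rw [integral_add hσbc_int hcσ_int]
    have e1 : ∫ x in cubeSet J, σ x * (b x - c) = B := by
      have hae : (fun x => σ x * (b x - c)) =ᵐ[volume.restrict (cubeSet J)]
          (fun x => |b x - c|) := by
        have h1 : (fun x => σ x * (b x - c)) =ᵐ[volume.restrict (cubeSet J)]
            (fun x => σ x * (b' x - c)) := by
          filter_upwards [Filter.EventuallyEq.restrict (μ := volume) (s := cubeSet J) hbae] with x hx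
          rw [hx]
        have h2 : (fun x => σ x * (b' x - c)) =ᵐ[volume.restrict (cubeSet J)]
            (fun x => |b' x - c|) := Filter.Eventually.of_forall (fun x => hσb x)
        have h3 : (fun x => |b' x - c|) =ᵐ[volume.restrict (cubeSet J)]
            (fun x => |b x - c|) := by
          filter_upwards [Filter.EventuallyEq.restrict (μ := volume) (s := cubeSet J) hbae] with x hx
          rw [hx]
        exact (h1.trans h2).trans h3
      rw [integral_congr_ae hae]
    have e2 : ∫ x in cubeSet J, (c * σ x - sbar * b x) = 0 := by
      rw [integral_sub (hσint.const_mul c) (hbJ.const_mul sbar)]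
      rw [integral_const_mul, integral_const_mul, hIσ, hIb]
      ring
    rw [e1, e2, add_zero]
  -- integrals of f₁ over big cubes vanish
  have hf₁_indicator_bg : (fun y => b y * f₁ y) = (cubeSet J).indicator (fun y => b y * g y) := by
    funext y
    by_cases hy : y ∈ cubeSet J
    · rw [hf₁def]; simp [Set.indicator_of_mem hy]
    · rw [hf₁def]; simp [Set.indicator_of_notMem hy]
  have hint_f₁ : ∀ Q : Cube n, cubeSet J ⊆ cubeSet Q → (∫ y in cubeSet Q, f₁ y) = 0 := by
    intro Q hQ
    rw [hf₁def, setIntegral_indicator (measurableSet_cubeSet J),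
      Set.inter_eq_self_of_subset_right hQ, hIg]
  have hint_bf₁ : ∀ Q : Cube n, cubeSet J ⊆ cubeSet Q →
      (∫ y in cubeSet Q, b y * f₁ y) = B := by
    intro Q hQ
    rw [hf₁_indicator_bg, setIntegral_indicator (measurableSet_cubeSet J),
      Set.inter_eq_self_of_subset_right hQ, hIbg]
  have hint_f₁_dis : ∀ Q : Cube n, cubeSet Q ∩ cubeSet J = ∅ → (∫ y in cubeSet Q, f₁ y) = 0 := by
    intro Q hQ
    rw [hf₁def, setIntegral_indicator (measurableSet_cubeSet J), hQ]
    simp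
  have hint_bf₁_dis : ∀ Q : Cube n, cubeSet Q ∩ cubeSet J = ∅ →
      (∫ y in cubeSet Q, b y * f₁ y) = 0 := by
    intro Q hQ
    rw [hf₁_indicator_bg, setIntegral_indicator (measurableSet_cubeSet J), hQ]
    simp
  -- geometric data
  set γ : ℝ := α/n - 2 with hγdef
  set w : ℝ := (2:ℝ)^n with hwdef
  have hw1 : 1 < w := one_lt_pow₀ (by norm_num) hn.ne'
  have hw0 : 0 < w := lt_trans one_pos hw1
  set ρ : ℝ := w ^ γ with hρdef
  have hρ0 : 0 ≤ ρ := Real.rpow_nonneg hw0.le _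
  have hαn2 : α / n < 2 := by rw [div_lt_iff₀ hnR]; linarith
  have hγneg : γ < 0 := by rw [hγdef]; linarith
  have hρ1 : ρ < 1 := Real.rpow_lt_one_of_one_lt_of_neg hw1 hγneg
  set v0 : ℝ := vol P with hv0def
  have hv00 : 0 < v0 := vol_pos P
  have hv0t : v0 = w * t := by
    rw [hv0def, hwdef, htdef]
    show ((2:ℝ)^(k+1))^n = (2:ℝ)^n * ((2:ℝ)^k)^n
    rw [h2k1, mul_pow]; ring
  set a : ℝ := B * t * (v0 ^ γ) with hadef
  have ha0 : 0 ≤ a := by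
    apply mul_nonneg (mul_nonneg hB0 ht.le) (Real.rpow_nonneg hv00.le _)
  set T : ℝ := ∑' j : ℕ, a * ρ^j with hTdef
  have hsumgeo : Summable (fun j : ℕ => a * ρ^j) :=
    (summable_geometric_of_lt_one hρ0 hρ1).mul_left a
  have haT : a ≤ T := by
    have := hsumgeo.le_tsum 0 (fun j _ => by positivity)
    simpa using this
  have hT0 : 0 ≤ T := tsum_nonneg (fun j => by positivity)
  -- measurability of test functions
  have hf₁meas : Measurable f₁ := by
    rw [hf₁def, hgdef]
    exact (hσmeas.sub measurable_const).indicator (measurableSet_cubeSet J)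
  have hf₂meas : Measurable f₂ := by
    rw [hf₂def]
    exact measurable_const.indicator (measurableSet_cubeSet S)
  -- pointwise value of the commutator on S
  have hvolS : vol S = t := by rw [htdef]; rfl
  have hkey : ∀ x ∈ cubeSet S,
      b x * IalphaBil α f₁ f₂ x - IalphaBil α (fun y => b y * f₁ y) f₂ x = -T := by
    intro x hxS
    have hzero : IalphaBil α f₁ f₂ x = 0 := by
      have hterm : ∀ Q : Cube n, vol Q ^ (α / n) * avg f₁ Q * avg f₂ Q *
          (cubeSet Q).indicator (fun _ => (1:ℝ)) x = 0 := by
        intro Q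
        by_cases hxQ : x ∈ cubeSet Q
        · have hIf₁ : (∫ y in cubeSet Q, f₁ y) = 0 := by
            by_cases hQJ : (cubeSet Q ∩ cubeSet J).Nonempty
            · rcases le_total Q.1 J.1 with hle | hle
              · exfalso
                have hsub : cubeSet Q ⊆ cubeSet J := subset_of_le_of_inter hle hQJ
                have : x ∈ cubeSet J ∩ cubeSet S := ⟨hsub hxQ, hxS⟩
                rw [hJS] at this; exact this
              · exact hint_f₁ Q (subset_of_le_of_inter hle (by rwa [Set.inter_comm] at hQJ))
            · exact hint_f₁_dis Q (Set.not_nonempty_iff_eq_empty.mp hQJ)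
          simp only [avg]
          rw [hIf₁]; simp
        · rw [Set.indicator_of_notMem hxQ]; ring
      simp only [IalphaBil]
      rw [tsum_congr hterm, tsum_zero]
    have hTeq : IalphaBil α (fun y => b y * f₁ y) f₂ x = T := by
      simp only [IalphaBil, hTdef]
      set F : Cube n → ℝ := fun Q => vol Q ^ (α / n) * avg (fun y => b y * f₁ y) Q *
          avg f₂ Q * (cubeSet Q).indicator (fun _ => (1:ℝ)) x with hFdef
      set Cj : ℕ → Cube n := fun j => (k + 1 + (j:ℤ), fun i => ⌊x i / (2:ℝ)^(k+1+(j:ℤ))⌋)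
        with hCjdef
      have hxCj : ∀ j, x ∈ cubeSet (Cj j) := fun j => mem_floorCube _ x
      have hSCj : ∀ j, cubeSet S ⊆ cubeSet (Cj j) := by
        intro j
        apply subset_of_le_of_inter (by show k ≤ k + 1 + (j:ℤ); omega)
        exact ⟨x, hxS, hxCj j⟩
      have hPCj : ∀ j, cubeSet P ⊆ cubeSet (Cj j) := by
        intro j
        apply subset_of_le_of_inter (by show k + 1 ≤ k + 1 + (j:ℤ); omega)
        exact ⟨x, hSP hxS, hxCj j⟩
      have hJCj : ∀ j, cubeSet J ⊆ cubeSet (Cj j) := fun j => hJP.trans (hPCj j)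
      have hvolCj : ∀ j, vol (Cj j) = v0 * w^j := by
        intro j
        show ((2:ℝ)^(k+1+(j:ℤ)))^n = v0 * w^j
        rw [zpow_add₀ (by norm_num : (2:ℝ) ≠ 0), mul_pow, hv0def]
        show _ = ((2:ℝ)^(k+1))^n * w ^ j
        congr 1
        rw [zpow_natCast, hwdef, ← pow_mul, ← pow_mul, Nat.mul_comm]
      have hvolCj_pos : ∀ j, (0:ℝ) < v0 * w^j := fun j => by positivity
      have hF : ∀ j : ℕ, F (Cj j) = a * ρ^j := by
        intro j
        show vol (Cj j) ^ (α / n) * avg (fun y => b y * f₁ y) (Cj j) *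
          avg f₂ (Cj j) * (cubeSet (Cj j)).indicator (fun _ => (1:ℝ)) x = a * ρ^j
        have e2 : avg (fun y => b y * f₁ y) (Cj j) = B / vol (Cj j) := by
          simp only [avg]
          rw [hint_bf₁ (Cj j) (hJCj j)]
        have e3 : avg f₂ (Cj j) = t / vol (Cj j) := by
          simp only [avg]
          rw [hf₂def, setIntegral_indicator (measurableSet_cubeSet S),
            Set.inter_eq_self_of_subset_right (hSCj j), setIntegral_const,
            measureReal_def, volume_cubeSet, hvolS, ENNReal.toReal_ofReal ht.le, smul_eq_mul, mul_one]
        have e4 : (cubeSet (Cj j)).indicator (fun _ => (1:ℝ)) x = 1 :=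
          Set.indicator_of_mem (hxCj j) _
        rw [e2, e3, e4, hvolCj j]
        have hv : (0:ℝ) < v0 * w^j := hvolCj_pos j
        have hrw : (v0 * w^j) ^ (α/n) * (B / (v0 * w^j)) * (t / (v0 * w^j)) * 1
            = (B * t) * (v0 * w^j) ^ γ := by
          rw [hγdef, Real.rpow_sub hv, show ((2:ℝ):ℝ) = ((2:ℕ):ℝ) by norm_num,
            Real.rpow_natCast]
          field_simp
        rw [hrw, Real.mul_rpow hv00.le (by positivity), hadef, hρdef]
        have : ((w:ℝ)^j) ^ γ = (w ^ γ)^j := by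
          rw [← Real.rpow_natCast w j, ← Real.rpow_mul hw0.le, mul_comm,
            Real.rpow_mul hw0.le, Real.rpow_natCast]
        rw [this]; ring
      have hCjinj : Function.Injective Cj := by
        intro j₁ j₂ h
        have : k + 1 + (j₁:ℤ) = k + 1 + (j₂:ℤ) := congrArg Prod.fst h
        omega
      have hsupp : ∀ Q : Cube n, F Q ≠ 0 → ∃ j, Q = Cj j := by
        intro Q hFQ
        have hxQ : x ∈ cubeSet Q := by
          by_contra hxQ
          apply hFQ
          show vol Q ^ (α / n) * avg (fun y => b y * f₁ y) Q *
            avg f₂ Q * (cubeSet Q).indicator (fun _ => (1:ℝ)) x = 0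
          rw [Set.indicator_of_notMem hxQ]; ring
        have hIQ : (∫ y in cubeSet Q, b y * f₁ y) ≠ 0 := by
          intro h0
          apply hFQ
          show vol Q ^ (α / n) * avg (fun y => b y * f₁ y) Q *
            avg f₂ Q * (cubeSet Q).indicator (fun _ => (1:ℝ)) x = 0
          simp only [avg, h0]; simp
        have hQJne : (cubeSet Q ∩ cubeSet J).Nonempty := by
          by_contra h
          exact hIQ (hint_bf₁_dis Q (Set.not_nonempty_iff_eq_empty.mp h))
        have hkQ : k + 1 ≤ Q.1 := by
          by_contra hcon
          push_neg at hcon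
          have hle : Q.1 ≤ J.1 := by rw [← hk] at *; omega
          have hsub : cubeSet Q ⊆ cubeSet J := subset_of_le_of_inter hle hQJne
          have : x ∈ cubeSet J ∩ cubeSet S := ⟨hsub hxQ, hxS⟩
          rw [hJS] at this; exact this
        refine ⟨(Q.1 - (k+1)).toNat, ?_⟩
        have hfst : Q.1 = k + 1 + ((Q.1 - (k+1)).toNat : ℤ) := by
          rw [Int.toNat_of_nonneg (by omega)]; ring
        have hsnd : ∀ i, Q.2 i = ⌊x i / (2:ℝ)^(k+1+((Q.1 - (k+1)).toNat : ℤ))⌋ := by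
          intro i
          rw [← hfst]
          exact eq_floor_of_mem hxQ i
        rw [hCjdef]
        exact Prod.ext hfst (funext hsnd)
      apply tsum_eq_tsum_of_ne_zero_bij (i := fun z => Cj z.1)
      · intro z₁ z₂ h
        exact Subtype.ext (hCjinj h)
      · intro Q hQ
        obtain ⟨j, hj⟩ := hsupp Q hQ
        refine ⟨⟨j, ?_⟩, hj.symm⟩
        show a * ρ^j ≠ 0
        rw [← hF j, ← hj]
        exact hQ
      · intro z
        exact hF z.1
    rw [hzero, hTeq]; ring
  -- main quantitative bound
  have hmain : B ≤ 2 * 4^n * N * t := by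
    rcases eq_or_lt_of_le hB0 with hB | hB
    · rw [← hB]; positivity
    · -- now B > 0, a > 0
      have ha : 0 < a := by
        rw [hadef]; positivity
      have H := hcomm f₁ f₂ hf₁meas hf₂meas
      -- lower bound for the LHS
      have h1 : ENNReal.ofReal (a^q) * ENNReal.ofReal t ≤
          ∫⁻ x, ENNReal.ofReal (|b x * IalphaBil α f₁ f₂ x
            - IalphaBil α (fun y => b y * f₁ y) f₂ x| ^ q) := by
        calc ENNReal.ofReal (a^q) * ENNReal.ofReal t
            = ∫⁻ _ in cubeSet S, ENNReal.ofReal (a^q) ∂volume := by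
              rw [setLIntegral_const, volume_cubeSet, hvolS]
          _ ≤ ∫⁻ x in cubeSet S, ENNReal.ofReal (|b x * IalphaBil α f₁ f₂ x
              - IalphaBil α (fun y => b y * f₁ y) f₂ x| ^ q) ∂volume := by
              apply lintegral_mono_ae
              filter_upwards [ae_restrict_mem (measurableSet_cubeSet S)] with x hx
              apply ENNReal.ofReal_le_ofReal
              apply Real.rpow_le_rpow ha0 _ hq'.le
              rw [hkey x hx, abs_neg, abs_of_nonneg hT0]
              exact haT
          _ ≤ _ := setLIntegral_le_lintegral _ _
      have h2 : ENNReal.ofReal (a * t^(1/q)) ≤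
          (∫⁻ x, ENNReal.ofReal (|b x * IalphaBil α f₁ f₂ x
            - IalphaBil α (fun y => b y * f₁ y) f₂ x| ^ q)) ^ (1/q) := by
        have step := ENNReal.rpow_le_rpow h1 (le_of_lt hq0)
        refine le_trans (le_of_eq ?_) step
        have haq : (a^q)^(1/q) = a := by
          rw [← Real.rpow_mul ha.le, mul_one_div_cancel hq'.ne', Real.rpow_one]
        rw [ENNReal.mul_rpow_of_nonneg _ _ (le_of_lt hq0),
          ENNReal.ofReal_rpow_of_pos (by positivity : (0:ℝ) < a^q),
          ENNReal.ofReal_rpow_of_pos ht, haq,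
          ← ENNReal.ofReal_mul ha.le]
      -- upper bound for the RHS factors
      have hsbar1 : |sbar| ≤ 1 := by
        rw [hsbardef, abs_div, abs_of_pos ht, div_le_one ht]
        calc |∫ x in cubeSet J, σ x| ≤ ∫ x in cubeSet J, |σ x| := by
              simpa using norm_integral_le_integral_norm (μ := volume.restrict (cubeSet J)) σ
          _ ≤ ∫ x in cubeSet J, (1:ℝ) := by
              apply setIntegral_mono_on hσint.abs (hconst_int 1) (measurableSet_cubeSet J)
              intro x _; exact hσ1 x
          _ = t := hI1
      have hf₁bd : ∀ x, |f₁ x| ≤ 2 := by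
        intro x
        rw [hf₁def]
        by_cases hx : x ∈ cubeSet J
        · rw [Set.indicator_of_mem hx, hgdef]
          calc |σ x - sbar| ≤ |σ x| + |sbar| := abs_sub _ _
            _ ≤ 1 + 1 := add_le_add (hσ1 x) hsbar1
            _ = 2 := by norm_num
        · rw [Set.indicator_of_notMem hx]; norm_num
      have h3 : (∫⁻ x, ENNReal.ofReal (|f₁ x| ^ p₁)) ≤ ENNReal.ofReal ((2:ℝ)^p₁ * t) := by
        calc (∫⁻ x, ENNReal.ofReal (|f₁ x| ^ p₁))
            ≤ ∫⁻ x, (cubeSet J).indicator (fun _ => ENNReal.ofReal ((2:ℝ)^p₁)) x := by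
              apply lintegral_mono
              intro x
              by_cases hx : x ∈ cubeSet J
              · simp only [Set.indicator_of_mem hx]
                exact ENNReal.ofReal_le_ofReal
                  (Real.rpow_le_rpow (abs_nonneg _) (hf₁bd x) hp₁0.le)
              · simp only [Set.indicator_of_notMem hx, hf₁def, abs_zero,
                  Real.zero_rpow hp₁0.ne', ENNReal.ofReal_zero, le_refl]
          _ = ENNReal.ofReal ((2:ℝ)^p₁ * t) := by
              rw [lintegral_indicator (measurableSet_cubeSet J), setLIntegral_const,
                hvolJ, ← ENNReal.ofReal_mul (by positivity)]
      have h4 : (∫⁻ x, ENNReal.ofReal (|f₂ x| ^ p₂)) = ENNReal.ofReal t := by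
        have hpt : ∀ x, ENNReal.ofReal (|f₂ x| ^ p₂)
            = (cubeSet S).indicator (fun _ => (1:ℝ≥0∞)) x := by
          intro x
          rw [hf₂def]
          by_cases hx : x ∈ cubeSet S
          · rw [Set.indicator_of_mem hx, Set.indicator_of_mem hx, abs_one, Real.one_rpow,
              ENNReal.ofReal_one]
          · rw [Set.indicator_of_notMem hx, Set.indicator_of_notMem hx, abs_zero,
              Real.zero_rpow hp₂0.ne']
            simp
        rw [lintegral_congr hpt, lintegral_indicator (measurableSet_cubeSet S),
          setLIntegral_const, one_mul, volume_cubeSet, hvolS]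
      -- combine
      have hchain : ENNReal.ofReal (a * t^(1/q)) ≤
          ENNReal.ofReal (N * ((2:ℝ)^p₁ * t)^(1/p₁) * t^(1/p₂)) := by
        refine le_trans h2 (le_trans H ?_)
        calc ENNReal.ofReal N * (∫⁻ x, ENNReal.ofReal (|f₁ x| ^ p₁)) ^ (1/p₁)
              * (∫⁻ x, ENNReal.ofReal (|f₂ x| ^ p₂)) ^ (1/p₂)
            ≤ ENNReal.ofReal N * (ENNReal.ofReal ((2:ℝ)^p₁ * t)) ^ (1/p₁)
              * (ENNReal.ofReal t) ^ (1/p₂) := by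
              apply mul_le_mul'
              · exact mul_le_mul' le_rfl (ENNReal.rpow_le_rpow h3 (by positivity))
              · rw [h4]
          _ = ENNReal.ofReal (N * ((2:ℝ)^p₁ * t)^(1/p₁) * t^(1/p₂)) := by
              rw [ENNReal.ofReal_rpow_of_pos (by positivity : (0:ℝ) < (2:ℝ)^p₁ * t),
                ENNReal.ofReal_rpow_of_pos ht,
                ← ENNReal.ofReal_mul hN, ← ENNReal.ofReal_mul (by positivity)]
      have hreal : a * t^(1/q) ≤ N * ((2:ℝ)^p₁ * t)^(1/p₁) * t^(1/p₂) := by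
        rwa [ENNReal.ofReal_le_ofReal_iff (by positivity)] at hchain
      -- unpack the algebra
      have hpow2 : ((2:ℝ)^p₁ * t)^(1/p₁) = 2 * t^(1/p₁) := by
        rw [Real.mul_rpow (by positivity) ht.le,
          ← Real.rpow_mul (by norm_num : (0:ℝ) ≤ 2), mul_one_div_cancel hp₁0.ne',
          Real.rpow_one]
      have hv0γ : v0 ^ γ = w ^ γ * t ^ γ := by
        rw [hv0t, Real.mul_rpow hw0.le ht.le]
      have hMpos : (0:ℝ) < t * t^γ * t^(1/q) := by positivity
      have hsplit : t^(1/p₁) * t^(1/p₂) = (t * t^γ * t^(1/q)) * t := by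
        have h1q : 1/p₁ + 1/p₂ = 1 + γ + 1/q + 1 := by
          rw [hγdef]
          have := hq
          linarith
        rw [← Real.rpow_add ht, h1q]
        rw [show (1:ℝ) + γ + 1/q + 1 = ((1:ℝ) + γ + 1/q) + 1 by ring,
          Real.rpow_add ht, Real.rpow_add ht, Real.rpow_add ht, Real.rpow_one]
      have hBw : B * w^γ ≤ 2 * N * t := by
        have expand : a * t^(1/q) = (B * w^γ) * (t * t^γ * t^(1/q)) := by
          rw [hadef, hv0γ]; ring
        have expand2 : N * ((2:ℝ)^p₁ * t)^(1/p₁) * t^(1/p₂)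
            = (2 * N * t) * (t * t^γ * t^(1/q)) := by
          rw [hpow2]
          calc N * (2 * t^(1/p₁)) * t^(1/p₂) = 2 * N * (t^(1/p₁) * t^(1/p₂)) := by ring
            _ = 2 * N * ((t * t^γ * t^(1/q)) * t) := by rw [hsplit]
            _ = (2 * N * t) * (t * t^γ * t^(1/q)) := by ring
        rw [expand, expand2] at hreal
        exact le_of_mul_le_mul_right hreal hMpos
      have hwγ : ((4:ℝ)^n)⁻¹ ≤ w^γ := by
        have h1 : w ^ ((-2 : ℝ)) ≤ w ^ γ := by
          apply Real.rpow_le_rpow_of_exponent_le hw1.le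
          rw [hγdef]
          have : 0 < α / n := by positivity
          linarith
        have h2 : w ^ ((-2:ℝ)) = ((4:ℝ)^n)⁻¹ := by
          rw [show ((-2:ℝ)) = -((2:ℕ):ℝ) by norm_num, Real.rpow_neg hw0.le,
            Real.rpow_natCast]
          congr 1
          rw [hwdef, ← pow_mul, mul_comm, pow_mul]
          norm_num
        rw [← h2]; exact h1
      have h4n : (0:ℝ) < (4:ℝ)^n := by positivity
      have h1w : 1 ≤ w^γ * (4:ℝ)^n := by
        calc (1:ℝ) = ((4:ℝ)^n)⁻¹ * (4:ℝ)^n := by field_simp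
          _ ≤ w^γ * (4:ℝ)^n := mul_le_mul_of_nonneg_right hwγ h4n.le
      calc B = B * 1 := (mul_one B).symm
        _ ≤ B * (w^γ * (4:ℝ)^n) := mul_le_mul_of_nonneg_left h1w hB0
        _ = (B * w^γ) * (4:ℝ)^n := by ring
        _ ≤ (2 * N * t) * (4:ℝ)^n := mul_le_mul_of_nonneg_right hBw h4n.le
        _ = 2 * 4^n * N * t := by ring
  -- conclude
  have hnum : (∫⁻ x in cubeSet J, ENNReal.ofReal |b x - avg b J|) = ENNReal.ofReal B := by
    rw [hBdef]
    rw [← ofReal_integral_eq_lintegral_ofReal (hbc_int.abs)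
      (Filter.Eventually.of_forall (fun x => abs_nonneg _))]
  rw [hnum]
  apply ENNReal.div_le_of_le_mul
  rw [← ENNReal.ofReal_mul (by positivity)]
  apply ENNReal.ofReal_le_ofReal
  calc B ≤ 2 * 4^n * N * t := hmain
    _ = 2 * 4 ^ n * N * vol J := by rw [htdef]
end
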